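/- Let h be a finite dimensional Leibniz algebra with basis e_1,…,e_n and structure constants τ, and let g be a Leibniz algebra with basis {f_i}_{i∈I} and structure constants β. Define A(h,g) as the quotient of the polynomial algebra k[X_{si} | s = 1..n, i ∈ I] by the ideal J generated by the polynomials P_{(a,i,j)} = Σ_u β^u_{ij} X_{au} - Σ_{s,t} τ^a_{st} X_{si} X_{tj}. Then the linear map η_g : g → h ⊗ A(h,g) defined on the basis by η_g(f_i) = Σ_s e_s ⊗ x_{si} (where x_{si} denotes the class of X_{si}) is a homomorphism of Leibniz algebras. -/

import Mathlib

open TensorProduct MvPolynomial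

/-- The universal polynomial `P_{(a,i,j)} = Σ_u β^u_{ij} X_{au} - Σ_{s,t} τ^a_{st} X_{si} X_{tj}`. -/
noncomputable def univPoly {k : Type*} [Field k] {n : ℕ} {I : Type*}
    (τ : Fin n → Fin n → Fin n → k) (β : I → I → I →₀ k)
    (a : Fin n) (i j : I) : MvPolynomial (Fin n × I) k :=
  (β i j).sum (fun u c => C c * X (a, u)) -
    ∑ s : Fin n, ∑ t : Fin n, C (τ s t a) * X (s, i) * X (t, j)

/-- The ideal generated by the universal polynomials. -/
noncomputable def univIdeal {k : Type*} [Field k] {n : ℕ} {I : Type*}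
    (τ : Fin n → Fin n → Fin n → k) (β : I → I → I →₀ k) :
    Ideal (MvPolynomial (Fin n × I) k) :=
  Ideal.span (Set.range fun p : Fin n × I × I => univPoly τ β p.1 p.2.1 p.2.2)

/-- The universal algebra `A(h,g)`. -/
noncomputable abbrev univAlg {k : Type*} [Field k] {n : ℕ} {I : Type*}
    (τ : Fin n → Fin n → Fin n → k) (β : I → I → I →₀ k) :=
  MvPolynomial (Fin n × I) k ⧸ univIdeal τ β

/-- The generator `x_{si}` of `A(h,g)`. -/
noncomputable def univGen {k : Type*} [Field k] {n : ℕ} {I : Type*}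
    (τ : Fin n → Fin n → Fin n → k) (β : I → I → I →₀ k)
    (s : Fin n) (i : I) : univAlg τ β :=
  Ideal.Quotient.mk (univIdeal τ β) (X (s, i))

set_option maxHeartbeats 1000000 in
set_option synthInstance.maxHeartbeats 1000000 in
/-- `η_g : g → h ⊗ A(h,g)`, `η_g(f_i) = Σ_s e_s ⊗ x_{si}`, is a Leibniz
algebra homomorphism, where `h = k^n` with structure constants `τ` and `g` is free on
`I` with structure constants `β`, and `h ⊗ A(h,g)` carries the current bracket. -/
theorem stmt_2 (k : Type*) [Field k] (n : ℕ) (I : Type*)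
    (τ : Fin n → Fin n → Fin n → k) (β : I → I → I →₀ k)
    (bH : (Fin n → k) →ₗ[k] (Fin n → k) →ₗ[k] (Fin n → k))
    (hbH : ∀ i j : Fin n, bH (Pi.single i 1) (Pi.single j 1) = fun s => τ i j s)
    (hLH : ∀ x y z, bH x (bH y z) = bH (bH x y) z - bH (bH x z) y)
    (bG : (I →₀ k) →ₗ[k] (I →₀ k) →ₗ[k] (I →₀ k))
    (hbG : ∀ i j : I, bG (Finsupp.single i 1) (Finsupp.single j 1) = β i j)
    (hLG : ∀ x y z, bG x (bG y z) = bG (bG x y) z - bG (bG x z) y)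
    (B : (Fin n → k) ⊗[k] univAlg τ β →ₗ[k] (Fin n → k) ⊗[k] univAlg τ β →ₗ[k]
      (Fin n → k) ⊗[k] univAlg τ β)
    (hB : ∀ (x y : Fin n → k) (a c : univAlg τ β),
      B (x ⊗ₜ[k] a) (y ⊗ₜ[k] c) = bH x y ⊗ₜ[k] (a * c))
    (η : (I →₀ k) →ₗ[k] (Fin n → k) ⊗[k] univAlg τ β)
    (hη : ∀ i : I, η (Finsupp.single i 1) =
      ∑ s : Fin n, Pi.single s 1 ⊗ₜ[k] univGen τ β s i) :
    ∀ u v : I →₀ k, η (bG u v) = B (η u) (η v) := by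
  classical
  -- The defining relation of `A(h,g)`: image of `P_{(a,i,j)}` vanishes.
  have key : ∀ (a : Fin n) (i j : I),
      ((β i j).sum fun u c => c • univGen τ β a u) =
        ∑ s : Fin n, ∑ t : Fin n, τ s t a • (univGen τ β s i * univGen τ β t j) := by
    intro a i j
    have h0 : Ideal.Quotient.mk (univIdeal τ β) (univPoly τ β a i j) = 0 :=
      Ideal.Quotient.eq_zero_iff_mem.mpr (Ideal.subset_span ⟨(a, i, j), rfl⟩)
    rw [univPoly, RingHom.map_sub, sub_eq_zero, Finsupp.sum, map_sum, map_sum] at h0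
    have hC : ∀ (c : k) (q : MvPolynomial (Fin n × I) k),
        Ideal.Quotient.mk (univIdeal τ β) (C c * q) =
          c • Ideal.Quotient.mk (univIdeal τ β) q := by
      intro c q
      rw [← smul_eq_C_mul]; rfl
    calc ((β i j).sum fun u c => c • univGen τ β a u)
        = ∑ u ∈ (β i j).support,
            Ideal.Quotient.mk (univIdeal τ β) (C ((β i j) u) * X (a, u)) := by
          rw [Finsupp.sum]; exact Finset.sum_congr rfl fun u _ => (hC _ _).symm
      _ = ∑ s : Fin n, ∑ t : Fin n, τ s t a • (univGen τ β s i * univGen τ β t j) := by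
          rw [h0]
          refine Finset.sum_congr rfl fun s _ => ?_
          rw [map_sum]
          refine Finset.sum_congr rfl fun t _ => ?_
          rw [mul_assoc, hC, map_mul]
          rfl
  -- Base case on basis vectors.
  have base : ∀ i j : I, η (bG (Finsupp.single i 1) (Finsupp.single j 1)) =
      B (η (Finsupp.single i 1)) (η (Finsupp.single j 1)) := by
    intro i j
    have hL : η (β i j) = ∑ a : Fin n,
        Pi.single a 1 ⊗ₜ[k] ((β i j).sum fun u c => c • univGen τ β a u) := by
      conv_lhs => rw [← Finsupp.sum_single (β i j), Finsupp.sum]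
      rw [map_sum]
      calc ∑ u ∈ (β i j).support, η (Finsupp.single u ((β i j) u))
          = ∑ u ∈ (β i j).support, ∑ a : Fin n,
              Pi.single a 1 ⊗ₜ[k] ((β i j) u • univGen τ β a u) := by
            refine Finset.sum_congr rfl fun u _ => ?_
            have h1 : Finsupp.single u ((β i j) u) =
                (β i j) u • Finsupp.single u (1 : k) := by
              rw [Finsupp.smul_single, smul_eq_mul, mul_one]
            rw [h1, map_smul, hη, Finset.smul_sum]
            exact Finset.sum_congr rfl fun a _ => (tmul_smul _ _ _).symm
        _ = ∑ a : Fin n, ∑ u ∈ (β i j).support,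
              Pi.single a 1 ⊗ₜ[k] ((β i j) u • univGen τ β a u) :=
            Finset.sum_comm
        _ = ∑ a : Fin n,
              Pi.single a 1 ⊗ₜ[k] ((β i j).sum fun u c => c • univGen τ β a u) :=
            Finset.sum_congr rfl fun a _ => by rw [Finsupp.sum, tmul_sum]
    have hR : B (∑ s : Fin n, Pi.single s 1 ⊗ₜ[k] univGen τ β s i)
        (∑ t : Fin n, Pi.single t 1 ⊗ₜ[k] univGen τ β t j) =
        ∑ a : Fin n, Pi.single a 1 ⊗ₜ[k]
          (∑ s : Fin n, ∑ t : Fin n, τ s t a • (univGen τ β s i * univGen τ β t j)) := by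
      rw [map_sum B (fun s => Pi.single s 1 ⊗ₜ[k] univGen τ β s i) Finset.univ,
        LinearMap.sum_apply]
      calc ∑ s : Fin n, B (Pi.single s 1 ⊗ₜ[k] univGen τ β s i)
              (∑ t : Fin n, Pi.single t 1 ⊗ₜ[k] univGen τ β t j)
          = ∑ s : Fin n, ∑ t : Fin n,
              (fun a => τ s t a) ⊗ₜ[k] (univGen τ β s i * univGen τ β t j) := by
            refine Finset.sum_congr rfl fun s _ => ?_
            rw [map_sum]
            exact Finset.sum_congr rfl fun t _ => by rw [hB, hbH]
        _ = ∑ s : Fin n, ∑ t : Fin n, ∑ a : Fin n,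
              Pi.single a 1 ⊗ₜ[k] (τ s t a • (univGen τ β s i * univGen τ β t j)) := by
            refine Finset.sum_congr rfl fun s _ => Finset.sum_congr rfl fun t _ => ?_
            conv_lhs => rw [← Finset.univ_sum_single (fun a => τ s t a), sum_tmul]
            refine Finset.sum_congr rfl fun a _ => ?_
            have h2 : Pi.single a (τ s t a) = τ s t a • (Pi.single a 1 : Fin n → k) := by
              rw [← Pi.single_smul, smul_eq_mul, mul_one]
            rw [h2, smul_tmul]
        _ = ∑ a : Fin n, ∑ s : Fin n, ∑ t : Fin n,
              Pi.single a 1 ⊗ₜ[k] (τ s t a • (univGen τ β s i * univGen τ β t j)) := by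
            have h3 : ∀ s : Fin n, ∑ t : Fin n, ∑ a : Fin n,
                (Pi.single a 1 : Fin n → k) ⊗ₜ[k]
                  (τ s t a • (univGen τ β s i * univGen τ β t j)) =
                ∑ a : Fin n, ∑ t : Fin n, (Pi.single a 1 : Fin n → k) ⊗ₜ[k]
                  (τ s t a • (univGen τ β s i * univGen τ β t j)) :=
              fun s => Finset.sum_comm
            exact (Finset.sum_congr rfl fun s _ => h3 s).trans Finset.sum_comm
        _ = ∑ a : Fin n, Pi.single a 1 ⊗ₜ[k]
              (∑ s : Fin n, ∑ t : Fin n, τ s t a • (univGen τ β s i * univGen τ β t j)) := by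
            refine Finset.sum_congr rfl fun a _ => ?_
            rw [tmul_sum]
            exact Finset.sum_congr rfl fun s _ => by rw [tmul_sum]
    rw [hbG, hL, hη, hη, hR]
    exact Finset.sum_congr rfl fun a _ => by rw [key a i j]
  -- Reduce the general statement to the base case by bilinearity.
  intro u v
  induction u using Finsupp.induction_linear with
  | zero => simp
  | add f g hf hg => simp [map_add, LinearMap.add_apply, hf, hg]
  | single i c =>
    induction v using Finsupp.induction_linear with
    | zero => simp
    | add f g hf hg => simp [map_add, LinearMap.add_apply, hf, hg]
    | single j d =>
      have hc : Finsupp.single i c = c • Finsupp.single i (1 : k) := by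
        rw [Finsupp.smul_single, smul_eq_mul, mul_one]
      have hd : Finsupp.single j d = d • Finsupp.single j (1 : k) := by
        rw [Finsupp.smul_single, smul_eq_mul, mul_one]
      simp only [hc, hd, map_smul, LinearMap.smul_apply, base i j]
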